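/- Let e = (e^I_μ) be a real 4×4 matrix and s ∈ {+1,−1}. (a) If B^{IJ}_{μν} := s (e^I_μ e^J_ν − e^I_ν e^J_μ) (topological sector) or B^{IJ}_{μν} := (s/2) Σ_{K,L} ε^{IJKL} (e^K_μ e^L_ν − e^K_ν e^L_μ) (gravitational sector), then ≺B_{μν}, B_{ρσ}≻ = 2 (det e) ε_{μνρσ} for all μ,ν,ρ,σ; hence B satisfies the simplicity constraints ≺B_{μν}, B_{ρσ}≻ = (𝒱/24) ε_{μνρσ} with 𝒱 = 48 det e, and 𝒱 ≠ 0 if and only if e is invertible. (b) In both cases also the second form of the simplicity constraints holds: Σ_{μ,ν,ρ,σ} ε^{μνρσ} B^{IJ}_{μν} B^{KL}_{ρσ} = 4 (det e) ε^{IJKL} for all I,J,K,L. -/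

import Mathlib

noncomputable section

/-- The Levi-Civita symbol on `{0,1,2,3}` (indexed by `Fin 4`), with `ε 0 1 2 3 = 1`. -/
def eps4 (i j k l : Fin 4) : ℝ :=
  (((j.val : ℝ) - i.val) * ((k.val : ℝ) - i.val) * ((l.val : ℝ) - i.val) *
    ((k.val : ℝ) - j.val) * ((l.val : ℝ) - j.val) * ((l.val : ℝ) - k.val)) / 12

/-- A B-field `B^{IJ}_{μν}`, written `B I J μ ν`. -/
abbrev BField : Type := Fin 4 → Fin 4 → Fin 4 → Fin 4 → ℝ

/-- The second invariant bilinear form in internal-index form: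
`≺x,y≻ = ½ ∑_{I,J,K,L} ε_{IJKL} x^{IJ} y^{KL}`. -/
def precB (x y : Fin 4 → Fin 4 → ℝ) : ℝ :=
  (1 / 2) * ∑ I : Fin 4, ∑ J : Fin 4, ∑ K : Fin 4, ∑ L : Fin 4, eps4 I J K L * x I J * y K L

/-- The four-dimensional volume `𝒱 = ∑ ε^{μνρσ} ≺B_{μν}, B_{ρσ}≻`. -/
def vol4 (B : BField) : ℝ :=
  ∑ μ : Fin 4, ∑ ν : Fin 4, ∑ ρ : Fin 4, ∑ τ : Fin 4,
    eps4 μ ν ρ τ * precB (fun I J => B I J μ ν) (fun I J => B I J ρ τ)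

namespace SimplicityAux

lemma v0 : ((0 : Fin 4).val) = 0 := rfl
lemma v1 : ((1 : Fin 4).val) = 1 := rfl
lemma v2 : ((2 : Fin 4).val) = 2 := rfl
lemma v3 : ((3 : Fin 4).val) = 3 := rfl

/-- Integer-valued Levi-Civita, scaled by 12. -/
def eps4i (i j k l : Fin 4) : ℤ :=
  ((j.val : ℤ) - i.val) * ((k.val : ℤ) - i.val) * ((l.val : ℤ) - i.val) *
    ((k.val : ℤ) - j.val) * ((l.val : ℤ) - j.val) * ((l.val : ℤ) - k.val)

lemma eps4_eq_cast (i j k l : Fin 4) : eps4 i j k l = ((eps4i i j k l : ℤ) : ℝ) / 12 := by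
  unfold eps4 eps4i; push_cast; ring

lemma eps4i_perm (σ : Equiv.Perm (Fin 4)) :
    eps4i (σ 0) (σ 1) (σ 2) (σ 3) = 12 * ((Equiv.Perm.sign σ : ℤˣ) : ℤ) := by revert σ; decide

set_option maxRecDepth 10000 in
lemma eps4i_zero_of_not_inj (v : Fin 4 → Fin 4) (h : ¬ Function.Injective v) :
    eps4i (v 0) (v 1) (v 2) (v 3) = 0 := by revert v; decide

lemma eps4_perm (σ : Equiv.Perm (Fin 4)) :
    eps4 (σ 0) (σ 1) (σ 2) (σ 3) = ((Equiv.Perm.sign σ : ℤˣ) : ℝ) := by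
  rw [eps4_eq_cast, eps4i_perm]; push_cast; ring

lemma eps4_zero_of_not_inj (v : Fin 4 → Fin 4) (h : ¬ Function.Injective v) :
    eps4 (v 0) (v 1) (v 2) (v 3) = 0 := by
  rw [eps4_eq_cast, eps4i_zero_of_not_inj v h]; norm_num

lemma eps4_swap12 (i j k l : Fin 4) : eps4 j i k l = - eps4 i j k l := by unfold eps4; ring
lemma eps4_swap34 (i j k l : Fin 4) : eps4 i j l k = - eps4 i j k l := by unfold eps4; ring
lemma eps4_swapb (i j k l : Fin 4) : eps4 j i l k = eps4 i j k l := by unfold eps4; ring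

lemma det_pick (g : Matrix (Fin 4) (Fin 4) ℝ) (v : Fin 4 → Fin 4) :
    (g.submatrix v id).det = g.det * eps4 (v 0) (v 1) (v 2) (v 3) := by
  by_cases hv : Function.Injective v
  · have hb : Function.Bijective v := (Finite.injective_iff_bijective).mp hv
    have h1 : g.submatrix v id = g.submatrix (Equiv.ofBijective v hb) id := rfl
    have h2 : eps4 (v 0) (v 1) (v 2) (v 3) =
        ((Equiv.Perm.sign (Equiv.ofBijective v hb) : ℤˣ) : ℝ) :=
      eps4_perm (Equiv.ofBijective v hb)
    rw [h1, Matrix.det_permute, h2]; ring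
  · obtain ⟨a, b, hab, hne⟩ := Function.not_injective_iff.mp hv
    have hrow : (g.submatrix v id) a = (g.submatrix v id) b := by
      funext j; simp [Matrix.submatrix, hab]
    rw [Matrix.det_zero_of_row_eq hne hrow, eps4_zero_of_not_inj v hv]
    ring

set_option maxHeartbeats 1000000 in
lemma det4 (M : Matrix (Fin 4) (Fin 4) ℝ) : M.det =
    M 0 0 * (M 1 1 * (M 2 2 * M 3 3 - M 2 3 * M 3 2) - M 1 2 * (M 2 1 * M 3 3 - M 2 3 * M 3 1)
      + M 1 3 * (M 2 1 * M 3 2 - M 2 2 * M 3 1))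
  - M 0 1 * (M 1 0 * (M 2 2 * M 3 3 - M 2 3 * M 3 2) - M 1 2 * (M 2 0 * M 3 3 - M 2 3 * M 3 0)
      + M 1 3 * (M 2 0 * M 3 2 - M 2 2 * M 3 0))
  + M 0 2 * (M 1 0 * (M 2 1 * M 3 3 - M 2 3 * M 3 1) - M 1 1 * (M 2 0 * M 3 3 - M 2 3 * M 3 0)
      + M 1 3 * (M 2 0 * M 3 1 - M 2 1 * M 3 0))
  - M 0 3 * (M 1 0 * (M 2 1 * M 3 2 - M 2 2 * M 3 1) - M 1 1 * (M 2 0 * M 3 2 - M 2 2 * M 3 0)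
      + M 1 2 * (M 2 0 * M 3 1 - M 2 1 * M 3 0)) := by
  rw [Matrix.det_succ_row_zero]
  simp [Fin.sum_univ_succ, Matrix.det_fin_three, Matrix.submatrix, Fin.succAbove]
  norm_num [Fin.lt_def, v0, v1, v2, v3, show (Fin.succ 2 : Fin 4) = 3 from rfl,
    show ((2 : Fin 3).castSucc : Fin 4) = 2 from rfl]
  ring

set_option maxHeartbeats 2000000 in
lemma quad (f g h k : Fin 4 → ℝ) :
    (∑ I : Fin 4, ∑ J : Fin 4, ∑ K : Fin 4, ∑ L : Fin 4,
      eps4 I J K L * f I * g J * h K * k L)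
    = Matrix.det (Matrix.of ![f, g, h, k]) := by
  rw [det4]
  simp only [Fin.sum_univ_four, Matrix.of_apply, Matrix.cons_val', Matrix.cons_val_zero,
    Matrix.cons_val_one, Matrix.head_cons, Matrix.head_fin_const, Matrix.cons_val_fin_one,
    Matrix.empty_val', Matrix.cons_val]
  norm_num [eps4, v0, v1, v2, v3]
  ring

lemma keyA (e : Matrix (Fin 4) (Fin 4) ℝ) (μ ν ρ τ : Fin 4) :
    (∑ I : Fin 4, ∑ J : Fin 4, ∑ K : Fin 4, ∑ L : Fin 4,
      eps4 I J K L * e I μ * e J ν * e K ρ * e L τ) = e.det * eps4 μ ν ρ τ := by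
  have h := quad (fun I => e I μ) (fun I => e I ν) (fun I => e I ρ) (fun I => e I τ)
  have h2 : Matrix.of ![fun I => e I μ, fun I => e I ν, fun I => e I ρ, fun I => e I τ]
      = (e.transpose).submatrix ![μ, ν, ρ, τ] id := by
    ext i j; fin_cases i <;> rfl
  rw [h, h2, det_pick, Matrix.det_transpose,
    show (![μ, ν, ρ, τ] : Fin 4 → Fin 4) 0 = μ from rfl,
    show (![μ, ν, ρ, τ] : Fin 4 → Fin 4) 1 = ν from rfl,
    show (![μ, ν, ρ, τ] : Fin 4 → Fin 4) 2 = ρ from rfl,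
    show (![μ, ν, ρ, τ] : Fin 4 → Fin 4) 3 = τ from rfl]

lemma keyB (e : Matrix (Fin 4) (Fin 4) ℝ) (I J K L : Fin 4) :
    (∑ μ : Fin 4, ∑ ν : Fin 4, ∑ ρ : Fin 4, ∑ τ : Fin 4,
      eps4 μ ν ρ τ * e I μ * e J ν * e K ρ * e L τ) = e.det * eps4 I J K L := by
  have h := quad (e I) (e J) (e K) (e L)
  have h2 : Matrix.of ![e I, e J, e K, e L] = e.submatrix ![I, J, K, L] id := by
    ext i j; fin_cases i <;> rfl
  rw [h, h2, det_pick,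
    show (![I, J, K, L] : Fin 4 → Fin 4) 0 = I from rfl,
    show (![I, J, K, L] : Fin 4 → Fin 4) 1 = J from rfl,
    show (![I, J, K, L] : Fin 4 → Fin 4) 2 = K from rfl,
    show (![I, J, K, L] : Fin 4 → Fin 4) 3 = L from rfl]

set_option maxHeartbeats 4000000 in
lemma top_a (e : Matrix (Fin 4) (Fin 4) ℝ) (s : ℝ) (μ ν ρ τ : Fin 4) :
    precB (fun I J => s * (e I μ * e J ν - e I ν * e J μ))
      (fun I J => s * (e I ρ * e J τ - e I τ * e J ρ)) = 2 * s ^ 2 * e.det * eps4 μ ν ρ τ := by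
  unfold precB
  have h1 := keyA e μ ν ρ τ
  have h2 : (∑ I : Fin 4, ∑ J : Fin 4, ∑ K : Fin 4, ∑ L : Fin 4,
      eps4 I J K L * e I ν * e J μ * e K ρ * e L τ) = - (e.det * eps4 μ ν ρ τ) := by
    rw [keyA e ν μ ρ τ, eps4_swap12]; ring
  have h3 : (∑ I : Fin 4, ∑ J : Fin 4, ∑ K : Fin 4, ∑ L : Fin 4,
      eps4 I J K L * e I μ * e J ν * e K τ * e L ρ) = - (e.det * eps4 μ ν ρ τ) := by
    rw [keyA e μ ν τ ρ, eps4_swap34]; ring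
  have h4 : (∑ I : Fin 4, ∑ J : Fin 4, ∑ K : Fin 4, ∑ L : Fin 4,
      eps4 I J K L * e I ν * e J μ * e K τ * e L ρ) = e.det * eps4 μ ν ρ τ := by
    rw [keyA e ν μ τ ρ, eps4_swapb]
  simp only [Fin.sum_univ_four] at h1 h2 h3 h4 ⊢
  linear_combination (s ^ 2 / 2) * h1 - (s ^ 2 / 2) * h2 - (s ^ 2 / 2) * h3 + (s ^ 2 / 2) * h4

set_option maxHeartbeats 4000000 in
lemma top_b (e : Matrix (Fin 4) (Fin 4) ℝ) (A B C D : Fin 4) :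
    (∑ μ : Fin 4, ∑ ν : Fin 4, ∑ ρ : Fin 4, ∑ τ : Fin 4,
      eps4 μ ν ρ τ * (e A μ * e B ν - e A ν * e B μ) * (e C ρ * e D τ - e C τ * e D ρ))
    = 4 * e.det * eps4 A B C D := by
  have h1 := keyB e A B C D
  have h2 : (∑ μ : Fin 4, ∑ ν : Fin 4, ∑ ρ : Fin 4, ∑ τ : Fin 4,
      eps4 μ ν ρ τ * e A ν * e B μ * e C ρ * e D τ) = - (e.det * eps4 A B C D) := by
    have h := keyB e B A C D
    have h' : (∑ μ : Fin 4, ∑ ν : Fin 4, ∑ ρ : Fin 4, ∑ τ : Fin 4,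
        eps4 μ ν ρ τ * e A ν * e B μ * e C ρ * e D τ)
        = ∑ μ : Fin 4, ∑ ν : Fin 4, ∑ ρ : Fin 4, ∑ τ : Fin 4,
          eps4 μ ν ρ τ * e B μ * e A ν * e C ρ * e D τ := by
      refine Finset.sum_congr rfl fun μ _ => Finset.sum_congr rfl fun ν _ =>
        Finset.sum_congr rfl fun ρ _ => Finset.sum_congr rfl fun τ _ => by ring
    rw [h', h, eps4_swap12]; ring
  have h3 : (∑ μ : Fin 4, ∑ ν : Fin 4, ∑ ρ : Fin 4, ∑ τ : Fin 4,
      eps4 μ ν ρ τ * e A μ * e B ν * e C τ * e D ρ) = - (e.det * eps4 A B C D) := by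
    have h := keyB e A B D C
    have h' : (∑ μ : Fin 4, ∑ ν : Fin 4, ∑ ρ : Fin 4, ∑ τ : Fin 4,
        eps4 μ ν ρ τ * e A μ * e B ν * e C τ * e D ρ)
        = ∑ μ : Fin 4, ∑ ν : Fin 4, ∑ ρ : Fin 4, ∑ τ : Fin 4,
          eps4 μ ν ρ τ * e A μ * e B ν * e D ρ * e C τ := by
      refine Finset.sum_congr rfl fun μ _ => Finset.sum_congr rfl fun ν _ =>
        Finset.sum_congr rfl fun ρ _ => Finset.sum_congr rfl fun τ _ => by ring
    rw [h', h, eps4_swap34]; ring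
  have h4 : (∑ μ : Fin 4, ∑ ν : Fin 4, ∑ ρ : Fin 4, ∑ τ : Fin 4,
      eps4 μ ν ρ τ * e A ν * e B μ * e C τ * e D ρ) = e.det * eps4 A B C D := by
    have h := keyB e B A D C
    have h' : (∑ μ : Fin 4, ∑ ν : Fin 4, ∑ ρ : Fin 4, ∑ τ : Fin 4,
        eps4 μ ν ρ τ * e A ν * e B μ * e C τ * e D ρ)
        = ∑ μ : Fin 4, ∑ ν : Fin 4, ∑ ρ : Fin 4, ∑ τ : Fin 4,
          eps4 μ ν ρ τ * e B μ * e A ν * e D ρ * e C τ := by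
      refine Finset.sum_congr rfl fun μ _ => Finset.sum_congr rfl fun ν _ =>
        Finset.sum_congr rfl fun ρ _ => Finset.sum_congr rfl fun τ _ => by ring
    rw [h', h, eps4_swapb]
  simp only [Fin.sum_univ_four] at h1 h2 h3 h4 ⊢
  linear_combination h1 - h2 - h3 + h4

set_option maxRecDepth 100000 in
set_option maxHeartbeats 4000000 in
lemma eps4i_triple (I J K L : Fin 4) :
    (∑ A : Fin 4, ∑ B : Fin 4, ∑ C : Fin 4, ∑ D : Fin 4,
      eps4i I J A B * eps4i K L C D * eps4i A B C D) = 576 * eps4i I J K L := by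
  revert I J K L; decide

set_option maxHeartbeats 4000000 in
lemma eps4_triple (I J K L : Fin 4) :
    (∑ A : Fin 4, ∑ B : Fin 4, ∑ C : Fin 4, ∑ D : Fin 4,
      eps4 I J A B * eps4 K L C D * eps4 A B C D) = 4 * eps4 I J K L := by
  have h := congrArg (fun z : ℤ => (z : ℝ)) (eps4i_triple I J K L)
  push_cast at h
  simp only [Fin.sum_univ_four] at h
  simp only [Fin.sum_univ_four, eps4_eq_cast]
  linear_combination (1 / 1728 : ℝ) * h

lemma collapse (g : Fin 4 → Fin 4 → Fin 4 → Fin 4 → ℝ) :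
    (∑ x : Fin 4 × Fin 4 × Fin 4 × Fin 4, g x.1 x.2.1 x.2.2.1 x.2.2.2)
      = ∑ a : Fin 4, ∑ b : Fin 4, ∑ c : Fin 4, ∑ d : Fin 4, g a b c d := by
  simp only [Fintype.sum_prod_type]

lemma sum_swap44
    (f : Fin 4 → Fin 4 → Fin 4 → Fin 4 → Fin 4 → Fin 4 → Fin 4 → Fin 4 → ℝ) :
    (∑ a : Fin 4, ∑ b : Fin 4, ∑ c : Fin 4, ∑ d : Fin 4,
      ∑ p : Fin 4, ∑ q : Fin 4, ∑ r : Fin 4, ∑ t : Fin 4, f a b c d p q r t)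
    = ∑ p : Fin 4, ∑ q : Fin 4, ∑ r : Fin 4, ∑ t : Fin 4,
      ∑ a : Fin 4, ∑ b : Fin 4, ∑ c : Fin 4, ∑ d : Fin 4, f a b c d p q r t := by
  rw [← collapse fun a b c d => ∑ p : Fin 4, ∑ q : Fin 4, ∑ r : Fin 4, ∑ t : Fin 4,
        f a b c d p q r t,
      ← collapse fun p q r t => ∑ a : Fin 4, ∑ b : Fin 4, ∑ c : Fin 4, ∑ d : Fin 4,
        f a b c d p q r t]
  have h1 : ∀ x : Fin 4 × Fin 4 × Fin 4 × Fin 4,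
      (∑ p : Fin 4, ∑ q : Fin 4, ∑ r : Fin 4, ∑ t : Fin 4,
        f x.1 x.2.1 x.2.2.1 x.2.2.2 p q r t)
      = ∑ y : Fin 4 × Fin 4 × Fin 4 × Fin 4,
          f x.1 x.2.1 x.2.2.1 x.2.2.2 y.1 y.2.1 y.2.2.1 y.2.2.2 :=
    fun x => (collapse _).symm
  have h2 : ∀ y : Fin 4 × Fin 4 × Fin 4 × Fin 4,
      (∑ a : Fin 4, ∑ b : Fin 4, ∑ c : Fin 4, ∑ d : Fin 4,
        f a b c d y.1 y.2.1 y.2.2.1 y.2.2.2)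
      = ∑ x : Fin 4 × Fin 4 × Fin 4 × Fin 4,
          f x.1 x.2.1 x.2.2.1 x.2.2.2 y.1 y.2.1 y.2.2.1 y.2.2.2 :=
    fun y => (collapse _).symm
  simp only [h1, h2]
  exact Finset.sum_comm

set_option maxHeartbeats 4000000 in
lemma grav_b (e : Matrix (Fin 4) (Fin 4) ℝ) (s : ℝ) (I J K L : Fin 4) :
    (∑ μ : Fin 4, ∑ ν : Fin 4, ∑ ρ : Fin 4, ∑ τ : Fin 4,
      eps4 μ ν ρ τ
        * ((s / 2) * ∑ A : Fin 4, ∑ B : Fin 4, eps4 I J A B * (e A μ * e B ν - e A ν * e B μ))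
        * ((s / 2) * ∑ C : Fin 4, ∑ D : Fin 4, eps4 K L C D * (e C ρ * e D τ - e C τ * e D ρ)))
    = 4 * s ^ 2 * e.det * eps4 I J K L := by
  have st : ∀ μ ν ρ τ : Fin 4,
      eps4 μ ν ρ τ
        * ((s / 2) * ∑ A : Fin 4, ∑ B : Fin 4, eps4 I J A B * (e A μ * e B ν - e A ν * e B μ))
        * ((s / 2) * ∑ C : Fin 4, ∑ D : Fin 4, eps4 K L C D * (e C ρ * e D τ - e C τ * e D ρ))
      = ∑ A : Fin 4, ∑ B : Fin 4, ∑ C : Fin 4, ∑ D : Fin 4,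
          (s ^ 2 / 4 * eps4 I J A B * eps4 K L C D)
            * (eps4 μ ν ρ τ * (e A μ * e B ν - e A ν * e B μ)
               * (e C ρ * e D τ - e C τ * e D ρ)) := by
    intro μ ν ρ τ
    simp only [Fin.sum_univ_four]
    ring
  simp only [st]
  rw [sum_swap44]
  have st2 : ∀ A B C D : Fin 4,
      (∑ μ : Fin 4, ∑ ν : Fin 4, ∑ ρ : Fin 4, ∑ τ : Fin 4,
        (s ^ 2 / 4 * eps4 I J A B * eps4 K L C D)
          * (eps4 μ ν ρ τ * (e A μ * e B ν - e A ν * e B μ)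
             * (e C ρ * e D τ - e C τ * e D ρ)))
      = (s ^ 2 * e.det) * (eps4 I J A B * eps4 K L C D * eps4 A B C D) := by
    intro A B C D
    simp only [← Finset.mul_sum]
    rw [top_b e A B C D]
    ring
  simp only [st2]
  simp only [← Finset.mul_sum]
  rw [eps4_triple]
  ring

set_option maxHeartbeats 4000000 in
lemma grav_red (e : Matrix (Fin 4) (Fin 4) ℝ) (s : ℝ) (μ ν ρ τ : Fin 4) :
    precB (fun I J => (s / 2) * ∑ K : Fin 4, ∑ L : Fin 4,
        eps4 I J K L * (e K μ * e L ν - e K ν * e L μ))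
      (fun I J => (s / 2) * ∑ K : Fin 4, ∑ L : Fin 4,
        eps4 I J K L * (e K ρ * e L τ - e K τ * e L ρ))
    = precB (fun I J => s * (e I μ * e J ν - e I ν * e J μ))
      (fun I J => s * (e I ρ * e J τ - e I τ * e J ρ)) := by
  unfold precB
  simp only [Fin.sum_univ_four]
  norm_num [eps4, v0, v1, v2, v3]
  ring

lemma top_bs (e : Matrix (Fin 4) (Fin 4) ℝ) (s : ℝ) (A B C D : Fin 4) :
    (∑ μ : Fin 4, ∑ ν : Fin 4, ∑ ρ : Fin 4, ∑ τ : Fin 4,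
      eps4 μ ν ρ τ * (s * (e A μ * e B ν - e A ν * e B μ))
        * (s * (e C ρ * e D τ - e C τ * e D ρ)))
    = 4 * s ^ 2 * e.det * eps4 A B C D := by
  have st : ∀ μ ν ρ τ : Fin 4,
      eps4 μ ν ρ τ * (s * (e A μ * e B ν - e A ν * e B μ))
        * (s * (e C ρ * e D τ - e C τ * e D ρ))
      = s ^ 2 * (eps4 μ ν ρ τ * (e A μ * e B ν - e A ν * e B μ)
          * (e C ρ * e D τ - e C τ * e D ρ)) := by
    intro μ ν ρ τ; ring
  simp only [st, ← Finset.mul_sum]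
  rw [top_b e A B C D]
  ring

set_option maxHeartbeats 1000000 in
lemma sumsq : (∑ μ : Fin 4, ∑ ν : Fin 4, ∑ ρ : Fin 4, ∑ τ : Fin 4,
    eps4 μ ν ρ τ * eps4 μ ν ρ τ) = 24 := by
  simp only [Fin.sum_univ_four]
  norm_num [eps4, v0, v1, v2, v3]

end SimplicityAux

open SimplicityAux in
/-- For a cotetrad `e` and a sign `s`, both the topological-sector B-field
`s (e^I_μ e^J_ν − e^I_ν e^J_μ)` and the gravitational-sector B-field
`(s/2) ∑ ε^{IJKL} (e^K_μ e^L_ν − e^K_ν e^L_μ)` satisfy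
(a) `≺B_{μν}, B_{ρσ}≻ = 2 (det e) ε_{μνρσ}`, hence the simplicity constraints
`≺B_{μν}, B_{ρσ}≻ = (𝒱/24) ε_{μνρσ}` with `𝒱 = 48 det e`, and `𝒱 ≠ 0` iff `e` is
invertible; and (b) the second form of the simplicity constraints
`∑ ε^{μνρσ} B^{IJ}_{μν} B^{KL}_{ρσ} = 4 (det e) ε^{IJKL}`. -/
theorem simplicity_of_sector_BFields (e : Matrix (Fin 4) (Fin 4) ℝ)
    (s : ℝ) (hs : s = 1 ∨ s = -1) (B : BField)
    (hB : (∀ I J μ ν, B I J μ ν = s * (e I μ * e J ν - e I ν * e J μ)) ∨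
          (∀ I J μ ν, B I J μ ν =
            (s / 2) * ∑ K : Fin 4, ∑ L : Fin 4,
              eps4 I J K L * (e K μ * e L ν - e K ν * e L μ))) :
    (∀ μ ν ρ τ : Fin 4,
      precB (fun I J => B I J μ ν) (fun I J => B I J ρ τ) = 2 * e.det * eps4 μ ν ρ τ) ∧
    (∀ μ ν ρ τ : Fin 4,
      precB (fun I J => B I J μ ν) (fun I J => B I J ρ τ) = (vol4 B / 24) * eps4 μ ν ρ τ) ∧
    vol4 B = 48 * e.det ∧
    (vol4 B ≠ 0 ↔ IsUnit e) ∧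
    (∀ I J K L : Fin 4,
      (∑ μ : Fin 4, ∑ ν : Fin 4, ∑ ρ : Fin 4, ∑ τ : Fin 4,
        eps4 μ ν ρ τ * B I J μ ν * B K L ρ τ) = 4 * e.det * eps4 I J K L) := by
  have hs2 : s ^ 2 = 1 := by rcases hs with rfl | rfl <;> norm_num
  have key : ∀ μ ν ρ τ : Fin 4,
      precB (fun I J => B I J μ ν) (fun I J => B I J ρ τ) = 2 * e.det * eps4 μ ν ρ τ := by
    intro μ ν ρ τ
    rcases hB with hB | hB
    · simp only [hB]
      rw [top_a e s μ ν ρ τ, hs2]; ring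
    · simp only [hB]
      rw [grav_red e s μ ν ρ τ, top_a e s μ ν ρ τ, hs2]; ring
  have key2 : ∀ I J K L : Fin 4,
      (∑ μ : Fin 4, ∑ ν : Fin 4, ∑ ρ : Fin 4, ∑ τ : Fin 4,
        eps4 μ ν ρ τ * B I J μ ν * B K L ρ τ) = 4 * e.det * eps4 I J K L := by
    intro I J K L
    rcases hB with hB | hB
    · simp only [hB]
      rw [top_bs e s I J K L, hs2]; ring
    · simp only [hB]
      rw [grav_b e s I J K L, hs2]; ring
  have hvol : vol4 B = 48 * e.det := by
    unfold vol4
    have st : ∀ μ ν ρ τ : Fin 4,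
        eps4 μ ν ρ τ * precB (fun I J => B I J μ ν) (fun I J => B I J ρ τ)
        = (2 * e.det) * (eps4 μ ν ρ τ * eps4 μ ν ρ τ) := by
      intro μ ν ρ τ; rw [key μ ν ρ τ]; ring
    simp only [st, ← Finset.mul_sum]
    rw [sumsq]; ring
  refine ⟨key, ?_, hvol, ?_, key2⟩
  · intro μ ν ρ τ; rw [key μ ν ρ τ, hvol]; ring
  · rw [hvol, Matrix.isUnit_iff_isUnit_det, isUnit_iff_ne_zero]
    constructor
    · intro h hd; exact h (by rw [hd]; ring)
    · intro h hz
      rcases mul_eq_zero.mp hz with h48 | hd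
      · norm_num at h48
      · exact h hd
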